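/- arXiv:1406.6357 — 4 statements merged into one kernel-verified Lean document; each statement's English description precedes it below -/
import Mathlib

section
/- Let $0 < r < 1$, let $(\Omega, \mu)$ be a probability space, and let $W$ be a set of nonnegative integrable functions on $\Omega$ such that for every finite family $f_1, \dots, f_N \in W$ the function $\left(\frac{1}{N}\sum_{n=1}^N f_n^{1/r}\right)^{r}$ has integral at most $1$. Suppose there exist $\delta > 0$, pairwise disjoint measurable sets $(E_n)_{n \ge 1}$, and functions $(f_n)_{n\ge1}$ in $W$ with $\int_{E_n} f_n\, d\mu > \delta$ for all $n$. Then for every $N$, $\delta \le N^{r - 1}$, a contradiction for large $N$; hence no such $\delta$ and sequences exist (i.e., $W$ is equi-integrable in this sense). -/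
open MeasureTheory
open scoped ENNReal

private lemma sum_rpow_le_aux {ι : Type*} {r : ℝ} (hr0 : 0 < r) (hr1 : r ≤ 1)
    (s : Finset ι) (a : ι → ℝ≥0∞) :
    (∑ i ∈ s, a i) ^ r ≤ ∑ i ∈ s, a i ^ r := by
  induction s using Finset.cons_induction with
  | empty => simp [ENNReal.zero_rpow_of_pos hr0]
  | cons i s hi ih =>
      rw [Finset.sum_cons, Finset.sum_cons]
      exact (ENNReal.rpow_add_le_add_rpow _ _ hr0.le hr1).trans (add_le_add_right ih _)

/-- Equi-integrability step in the nonlinear Maurey/Nikishin theorem: on a probability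
space, if every finite family `f_1, …, f_N` from a set `W` of nonnegative integrable
functions satisfies `∫ ((1/N) ∑ f_n^{1/r})^r dμ ≤ 1` (with `0 < r < 1`), then there can
be no `δ > 0`, pairwise disjoint sets `E_n` and functions `f_n ∈ W` with
`∫_{E_n} f_n dμ > δ` for all `n`. -/
theorem stmt_4 {Ω : Type*} [MeasurableSpace Ω] (μ : Measure Ω) [IsProbabilityMeasure μ]
    (r : ℝ) (hr0 : 0 < r) (hr1 : r < 1)
    (f : ℕ → Ω → ℝ) (hf_nn : ∀ n ω, 0 ≤ f n ω) (hf_int : ∀ n, Integrable (f n) μ)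
    (hpow : ∀ N : ℕ, 0 < N →
      ∫ ω, ((∑ n ∈ Finset.range N, f n ω ^ (1 / r)) / N) ^ r ∂μ ≤ 1)
    (E : ℕ → Set Ω) (hE : ∀ n, MeasurableSet (E n))
    (hdisj : Pairwise (Function.onFun Disjoint E))
    (δ : ℝ) (hδ : 0 < δ) (hlow : ∀ n, δ < ∫ ω in E n, f n ω ∂μ) :
    False := by
  -- choose N large
  obtain ⟨N, hNgt⟩ := exists_nat_gt (max 1 ((1 / δ) ^ (1 / (1 - r))))
  have hN1 : (1 : ℝ) < N := lt_of_le_of_lt (le_max_left _ _) hNgt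
  have hNpos : (0 : ℝ) < N := lt_trans one_pos hN1
  have hN0 : 0 < N := by exact_mod_cast hNpos
  have h1r : (0 : ℝ) < 1 - r := by linarith
  -- Step A : (N:ℝ)^(r-1) < δ
  have hA : (N : ℝ) ^ (r - 1) < δ := by
    have hb : (0 : ℝ) ≤ (1 / δ) ^ (1 / (1 - r)) :=
      Real.rpow_nonneg (by positivity) _
    have h2 : ((1 / δ) ^ (1 / (1 - r))) ^ (1 - r) < (N : ℝ) ^ (1 - r) :=
      Real.rpow_lt_rpow hb (lt_of_le_of_lt (le_max_right _ _) hNgt) h1r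
    rw [← Real.rpow_mul (by positivity : (0:ℝ) ≤ 1 / δ), one_div_mul_cancel h1r.ne',
      Real.rpow_one] at h2
    have h3 : 1 / δ < (N : ℝ) ^ (1 - r) := h2
    have h4 : (N : ℝ) ^ (r - 1) = ((N : ℝ) ^ (1 - r))⁻¹ := by
      rw [← Real.rpow_neg hNpos.le]; ring_nf
    rw [h4]
    rw [one_div] at h3
    have hpos : (0 : ℝ) < (N : ℝ) ^ (1 - r) := Real.rpow_pos_of_pos hNpos _
    calc ((N : ℝ) ^ (1 - r))⁻¹ < δ⁻¹⁻¹ := by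
          apply inv_strictAnti₀ (by positivity) h3
      _ = δ := inv_inv δ
  -- Step B : δ ≤ (N:ℝ)^(r-1)
  set F : ℕ → Ω → ℝ≥0∞ := fun n ω => ENNReal.ofReal (f n ω) with hF
  set S : Ω → ℝ≥0∞ := fun ω => (∑ m ∈ Finset.range N, (F m ω) ^ (1 / r)) ^ r with hS
  have key1 : ∀ n, ENNReal.ofReal (∫ ω in E n, f n ω ∂μ) = ∫⁻ ω in E n, F n ω ∂μ := by
    intro n
    exact ofReal_integral_eq_lintegral_ofReal ((hf_int n).restrict)
      (Filter.Eventually.of_forall fun ω => hf_nn n ω)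
  have hδle : ∀ n, ENNReal.ofReal δ ≤ ∫⁻ ω in E n, F n ω ∂μ := by
    intro n
    rw [← key1 n]
    exact ENNReal.ofReal_le_ofReal (hlow n).le
  have hFS : ∀ n ∈ Finset.range N, ∀ ω, F n ω ≤ S ω := by
    intro n hn ω
    have : F n ω = ((F n ω) ^ (1 / r)) ^ r := by
      rw [← ENNReal.rpow_mul, one_div, inv_mul_cancel₀ hr0.ne', ENNReal.rpow_one]
    rw [this]
    exact ENNReal.rpow_le_rpow
      (Finset.single_le_sum (f := fun m => (F m ω) ^ (1/r)) (fun m _ => zero_le) hn) hr0.le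
  -- Measurability of the sum function
  have hmeas : ∀ m, AEMeasurable (f m) μ := fun m => (hf_int m).aemeasurable
  have hgmeas : AEMeasurable (fun ω => ∑ m ∈ Finset.range N, f m ω ^ (1 / r)) μ :=
    Finset.aemeasurable_fun_sum _ fun m _ => (hmeas m).pow aemeasurable_const
  -- h, the real integrand
  set h : Ω → ℝ := fun ω => ((∑ m ∈ Finset.range N, f m ω ^ (1 / r)) / N) ^ r with hh
  have hh_nn : ∀ ω, 0 ≤ h ω := by
    intro ω
    apply Real.rpow_nonneg
    apply div_nonneg _ hNpos.le
    exact Finset.sum_nonneg fun m _ => Real.rpow_nonneg (hf_nn m ω) _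
  have hh_meas : AEStronglyMeasurable h μ :=
    ((hgmeas.div_const _).pow aemeasurable_const).aestronglyMeasurable
  -- pointwise : ofReal (h ω) = T ω
  set T : Ω → ℝ≥0∞ := fun ω => ((∑ m ∈ Finset.range N, (F m ω) ^ (1 / r)) / N) ^ r with hT
  have hhT : ∀ ω, ENNReal.ofReal (h ω) = T ω := by
    intro ω
    have hsum_nn : 0 ≤ ∑ m ∈ Finset.range N, f m ω ^ (1 / r) :=
      Finset.sum_nonneg fun m _ => Real.rpow_nonneg (hf_nn m ω) _
    show ENNReal.ofReal (((∑ m ∈ Finset.range N, f m ω ^ (1 / r)) / N) ^ r)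
        = ((∑ m ∈ Finset.range N, F m ω ^ (1 / r)) / N) ^ r
    rw [← ENNReal.ofReal_rpow_of_nonneg (div_nonneg hsum_nn hNpos.le) hr0.le]
    rw [ENNReal.ofReal_div_of_pos hNpos]
    rw [ENNReal.ofReal_sum_of_nonneg (fun m _ => Real.rpow_nonneg (hf_nn m ω) _)]
    rw [ENNReal.ofReal_natCast]
    congr 2
    refine Finset.sum_congr rfl fun m _ => ?_
    rw [ENNReal.ofReal_rpow_of_nonneg (hf_nn m ω) (by positivity)]
  -- lintegral of T is finite
  have hT_bound : ∀ ω, T ω ≤ (∑ m ∈ Finset.range N, F m ω) / (N : ℝ≥0∞) ^ r := by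
    intro ω
    show ((∑ m ∈ Finset.range N, F m ω ^ (1 / r)) / (N : ℝ≥0∞)) ^ r
        ≤ (∑ m ∈ Finset.range N, F m ω) / (N : ℝ≥0∞) ^ r
    rw [ENNReal.div_rpow_of_nonneg _ _ hr0.le]
    apply ENNReal.div_le_div_right
    refine le_trans (sum_rpow_le_aux hr0 hr1.le _ _) ?_
    apply le_of_eq
    refine Finset.sum_congr rfl fun m _ => ?_
    rw [← ENNReal.rpow_mul, one_div, inv_mul_cancel₀ hr0.ne', ENNReal.rpow_one]
  have hFfin : ∀ m, ∫⁻ ω, F m ω ∂μ < ⊤ := by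
    intro m
    rw [← ofReal_integral_eq_lintegral_ofReal (hf_int m)
      (Filter.Eventually.of_forall fun ω => hf_nn m ω)]
    exact ENNReal.ofReal_lt_top
  have hTfin : ∫⁻ ω, T ω ∂μ < ⊤ := by
    calc ∫⁻ ω, T ω ∂μ ≤ ∫⁻ ω, (∑ m ∈ Finset.range N, F m ω) / (N : ℝ≥0∞) ^ r ∂μ :=
          lintegral_mono hT_bound
      _ = (∫⁻ ω, ∑ m ∈ Finset.range N, F m ω ∂μ) / (N : ℝ≥0∞) ^ r := by
          simp_rw [div_eq_mul_inv]
          exact lintegral_mul_const' _ _ (by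
            simp [ENNReal.inv_ne_top, ENNReal.rpow_eq_zero_iff, hN0.ne', hr0] )
      _ = (∑ m ∈ Finset.range N, ∫⁻ ω, F m ω ∂μ) / (N : ℝ≥0∞) ^ r := by
          rw [lintegral_finset_sum' _ fun m _ => (hmeas m).ennreal_ofReal]
      _ < ⊤ := by
          apply ENNReal.div_lt_top
          · exact (ENNReal.sum_lt_top.mpr fun m _ => hFfin m).ne
          · simp [ENNReal.rpow_eq_zero_iff, hN0.ne', hr0]
  -- h is integrable
  have hh_int : Integrable h μ := by
    refine ⟨hh_meas, ?_⟩
    rw [hasFiniteIntegral_iff_ofReal (Filter.Eventually.of_forall hh_nn)]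
    calc ∫⁻ ω, ENNReal.ofReal (h ω) ∂μ = ∫⁻ ω, T ω ∂μ := by
          exact lintegral_congr fun ω => hhT ω
      _ < ⊤ := hTfin
  -- lintegral of T ≤ 1
  have hT1 : ∫⁻ ω, T ω ∂μ ≤ 1 := by
    have : ∫⁻ ω, T ω ∂μ = ENNReal.ofReal (∫ ω, h ω ∂μ) := by
      rw [ofReal_integral_eq_lintegral_ofReal hh_int (Filter.Eventually.of_forall hh_nn)]
      exact lintegral_congr fun ω => (hhT ω).symm
    rw [this]
    calc ENNReal.ofReal (∫ ω, h ω ∂μ) ≤ ENNReal.ofReal 1 :=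
          ENNReal.ofReal_le_ofReal (hpow N hN0)
      _ = 1 := ENNReal.ofReal_one
  -- lintegral of S ≤ N^r
  have hSN : ∫⁻ ω, S ω ∂μ ≤ (N : ℝ≥0∞) ^ r := by
    have hST : ∀ ω, S ω = (N : ℝ≥0∞) ^ r * T ω := by
      intro ω
      rw [hS, hT]
      rw [← ENNReal.mul_rpow_of_nonneg _ _ hr0.le]
      congr 1
      rw [ENNReal.mul_div_cancel (by exact_mod_cast hN0.ne') (by simp)]
    calc ∫⁻ ω, S ω ∂μ = ∫⁻ ω, (N : ℝ≥0∞) ^ r * T ω ∂μ := lintegral_congr hST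
      _ = (N : ℝ≥0∞) ^ r * ∫⁻ ω, T ω ∂μ :=
          lintegral_const_mul' _ _ (ENNReal.rpow_ne_top_of_nonneg hr0.le (by simp))
      _ ≤ (N : ℝ≥0∞) ^ r * 1 := mul_le_mul_right hT1 _
      _ = (N : ℝ≥0∞) ^ r := mul_one _
  -- chain : N * ofReal δ ≤ N^r
  have hchain : (N : ℝ≥0∞) * ENNReal.ofReal δ ≤ (N : ℝ≥0∞) ^ r := by
    calc (N : ℝ≥0∞) * ENNReal.ofReal δ = ∑ _n ∈ Finset.range N, ENNReal.ofReal δ := by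
          simp [Finset.sum_const, mul_comm]
      _ ≤ ∑ n ∈ Finset.range N, ∫⁻ ω in E n, F n ω ∂μ :=
          Finset.sum_le_sum fun n _ => hδle n
      _ ≤ ∑ n ∈ Finset.range N, ∫⁻ ω in E n, S ω ∂μ :=
          Finset.sum_le_sum fun n hn =>
            lintegral_mono fun ω => hFS n hn ω
      _ = ∫⁻ ω in ⋃ n ∈ Finset.range N, E n, S ω ∂μ := by
          rw [lintegral_biUnion_finset
            (fun n _ m _ hnm => hdisj hnm) (fun n _ => hE n)]
      _ ≤ ∫⁻ ω, S ω ∂μ := setLIntegral_le_lintegral _ _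
      _ ≤ (N : ℝ≥0∞) ^ r := hSN
  -- conclude δ ≤ N^(r-1)
  have hNne : (N : ℝ≥0∞) ≠ 0 := by exact_mod_cast hN0.ne'
  have hNtop : (N : ℝ≥0∞) ≠ ⊤ := ENNReal.natCast_ne_top N
  have hB : ENNReal.ofReal δ ≤ (N : ℝ≥0∞) ^ (r - 1) := by
    rw [ENNReal.rpow_sub _ _ hNne hNtop, ENNReal.rpow_one]
    rw [ENNReal.le_div_iff_mul_le (Or.inl hNne) (Or.inl hNtop)]
    rwa [mul_comm]
  have hB' : δ ≤ (N : ℝ) ^ (r - 1) := by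
    have : (N : ℝ≥0∞) ^ (r - 1) = ENNReal.ofReal ((N : ℝ) ^ (r - 1)) := by
      rw [← ENNReal.ofReal_natCast, ENNReal.ofReal_rpow_of_pos hNpos]
    rw [this] at hB
    exact (ENNReal.ofReal_le_ofReal_iff (Real.rpow_nonneg hNpos.le _)).mp hB
  linarith
end

section
/- Let $X$ be a Banach space, $E$ a Banach lattice, $1 \le p < \infty$, and $T : X \to E$ a linear map. Then $T$ is $p$-convex (with constant $M$) if and only if $T$ is Lipschitz $p$-convex (with the same constant), where in the Lipschitz definition the metric on $X$ is the norm metric. -/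
/-- A linear map `T : X → E` from a Banach space into a Banach lattice is `p`-convex
with constant `M` if and only if it is Lipschitz `p`-convex with the same constant
(the metric on `X` being the norm metric). Here `K` denotes the Krivine functional
calculus `(v_1, …, v_n) ↦ (∑_j |v_j|^p)^{1/p}` in `E`. -/
theorem stmt_8 {X E : Type*} [NormedAddCommGroup X] [NormedSpace ℝ X]
    [NormedAddCommGroup E] [Lattice E] [IsOrderedAddMonoid E] [HasSolidNorm E] [NormedSpace ℝ E] [CompleteSpace X] [CompleteSpace E]
    (p : ℝ) (hp : 1 ≤ p) (T : X →ₗ[ℝ] E) (M : ℝ)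
    (K : ∀ {n : ℕ}, (Fin n → E) → E)
    (hK_single : ∀ u : E, K (fun _ : Fin 1 => u) = |u|)
    (hK_smul : ∀ (n : ℕ) (c : Fin n → ℝ) (v : Fin n → E), (∀ j, 0 ≤ c j) →
      K (fun j => c j • |v j|) = K (fun j => |c j • v j|)) :
    (∀ (n : ℕ) (v : Fin n → X),
        ‖K (fun j => |T (v j)|)‖ ≤ M * (∑ j, ‖v j‖ ^ p) ^ (1 / p)) ↔
      (∀ (n : ℕ) (lam : Fin n → ℝ) (x x' : Fin n → X), (∀ j, 0 ≤ lam j) →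
        ‖K (fun j => lam j ^ (1 / p) • |T (x j) - T (x' j)|)‖ ≤
          M * (∑ j, lam j * ‖x j - x' j‖ ^ p) ^ (1 / p)) := by
  have hp0 : p ≠ 0 := by linarith
  constructor
  · intro h n lam x x' hlam
    set c : Fin n → ℝ := fun j => lam j ^ (1 / p) with hc
    have hc0 : ∀ j, 0 ≤ c j := fun j => Real.rpow_nonneg (hlam j) _
    have hKeq : K (fun j => lam j ^ (1 / p) • |T (x j) - T (x' j)|)
        = K (fun j => |T (c j • (x j - x' j))|) := by
      rw [hK_smul n c (fun j => T (x j) - T (x' j)) hc0]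
      congr 1
      funext j
      rw [map_smul, map_sub]
    rw [hKeq]
    calc ‖K (fun j => |T (c j • (x j - x' j))|)‖
        ≤ M * (∑ j, ‖c j • (x j - x' j)‖ ^ p) ^ (1 / p) := h n _
      _ = M * (∑ j, lam j * ‖x j - x' j‖ ^ p) ^ (1 / p) := by
          congr 2
          apply Finset.sum_congr rfl
          intro j _
          rw [norm_smul, Real.norm_eq_abs, abs_of_nonneg (hc0 j),
            Real.mul_rpow (hc0 j) (norm_nonneg _), hc,
            ← Real.rpow_mul (hlam j), one_div_mul_cancel hp0, Real.rpow_one]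
  · intro h n v
    have := h n (fun _ => 1) v (fun _ => 0) (fun _ => zero_le_one)
    simpa using this
end

section
/- Let $E$ be a Banach lattice, $X$ a metric space, $1 \le p < \infty$. Suppose $T : X \to E$ factors as $T = \psi \circ R$ where $R : X \to W$ is a Lipschitz map into a Banach lattice $W$ which is $p$-convex with constant $M^{(p)}(I_W)$, and $\psi : W \to E$ is a positive bounded linear lattice homomorphism. Then $T$ is Lipschitz $p$-convex with $M^{(p)}_{\mathrm{Lip}}(T) \le \mathrm{Lip}(R) \cdot M^{(p)}(I_W) \cdot \|\psi\|$. -/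
/-- If `T : X → E` factors as `T = ψ ∘ R` with `R : X → W` Lipschitz, `W` a `p`-convex
Banach lattice with constant `M`, and `ψ : W → E` a positive bounded linear lattice
homomorphism (commuting with the Krivine functional calculus), then `T` is Lipschitz
`p`-convex with `M^{(p)}_{Lip}(T) ≤ Lip(R) · M · ‖ψ‖`. Here `K_W`, `K_E` denote the
Krivine `p`-sum `(v_j)_j ↦ (∑_j |v_j|^p)^{1/p}` in `W` and `E` respectively. -/
theorem stmt_10 {X W E : Type*} [MetricSpace X]
    [NormedAddCommGroup W] [Lattice W] [HasSolidNorm W] [IsOrderedAddMonoid W] [NormedSpace ℝ W] [CompleteSpace W]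
    [NormedAddCommGroup E] [Lattice E] [HasSolidNorm E] [IsOrderedAddMonoid E] [NormedSpace ℝ E] [CompleteSpace E]
    (p : ℝ) (hp : 1 ≤ p) (T : X → E) (R : X → W) (ψ : W →L[ℝ] E)
    (LR M : ℝ) (hLR : 0 ≤ LR) (hM : 0 ≤ M)
    (hR : ∀ x x' : X, dist (R x) (R x') ≤ LR * dist x x')
    (hψ_pos : ∀ w : W, 0 ≤ w → 0 ≤ ψ w)
    (hψ_latt : ∀ w : W, ψ |w| = |ψ w|)
    (hfactor : ∀ x : X, T x = ψ (R x))
    (K_W : ∀ {n : ℕ}, (Fin n → W) → W) (K_E : ∀ {n : ℕ}, (Fin n → E) → E)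
    (hK_single_W : ∀ w : W, K_W (fun _ : Fin 1 => w) = |w|)
    (hK_single_E : ∀ u : E, K_E (fun _ : Fin 1 => u) = |u|)
    (hψ_commute : ∀ (n : ℕ) (v : Fin n → W), ψ (K_W v) = K_E (fun j => ψ (v j)))
    (hWconv : ∀ (n : ℕ) (v : Fin n → W),
      ‖K_W v‖ ≤ M * (∑ j, ‖v j‖ ^ p) ^ (1 / p)) :
    ∀ (n : ℕ) (lam : Fin n → ℝ) (x x' : Fin n → X), (∀ j, 0 ≤ lam j) →
      ‖K_E (fun j => lam j ^ (1 / p) • |T (x j) - T (x' j)|)‖ ≤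
        (LR * M * ‖ψ‖) * (∑ j, lam j * dist (x j) (x' j) ^ p) ^ (1 / p) := by
  intro n lam x x' hlam
  have hp0 : 0 < p := lt_of_lt_of_le one_pos hp
  have hpne : p ≠ 0 := ne_of_gt hp0
  set v : Fin n → W := fun j => lam j ^ (1 / p) • |R (x j) - R (x' j)| with hv
  have hkey : K_E (fun j => lam j ^ (1 / p) • |T (x j) - T (x' j)|) = ψ (K_W v) := by
    rw [hψ_commute]
    congr 1
    funext j
    simp only [hv, map_smul, hψ_latt, map_sub, hfactor]
  rw [hkey]
  have h1 : ‖ψ (K_W v)‖ ≤ ‖ψ‖ * ‖K_W v‖ := ψ.le_opNorm _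
  have h2 : ‖K_W v‖ ≤ M * (∑ j, ‖v j‖ ^ p) ^ (1 / p) := hWconv n v
  -- bound on the sum
  have hsum : (∑ j, ‖v j‖ ^ p) ≤ LR ^ p * ∑ j, lam j * dist (x j) (x' j) ^ p := by
    rw [Finset.mul_sum]
    apply Finset.sum_le_sum
    intro j _
    have hnv : ‖v j‖ = lam j ^ (1 / p) * dist (R (x j)) (R (x' j)) := by
      rw [hv]
      rw [norm_smul, Real.norm_eq_abs, abs_of_nonneg (Real.rpow_nonneg (hlam j) _)]
      congr 1
      rw [norm_abs_eq_norm, ← dist_eq_norm]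
    have hd : dist (R (x j)) (R (x' j)) ≤ LR * dist (x j) (x' j) := hR _ _
    calc ‖v j‖ ^ p = (lam j ^ (1 / p)) ^ p * dist (R (x j)) (R (x' j)) ^ p := by
          rw [hnv, Real.mul_rpow (Real.rpow_nonneg (hlam j) _) dist_nonneg]
      _ = lam j * dist (R (x j)) (R (x' j)) ^ p := by
          rw [← Real.rpow_mul (hlam j), one_div_mul_cancel hpne, Real.rpow_one]
      _ ≤ lam j * (LR * dist (x j) (x' j)) ^ p := by
          apply mul_le_mul_of_nonneg_left _ (hlam j)
          exact Real.rpow_le_rpow dist_nonneg hd (le_of_lt hp0)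
      _ = LR ^ p * (lam j * dist (x j) (x' j) ^ p) := by
          rw [Real.mul_rpow hLR dist_nonneg]; ring
  have hSnn : 0 ≤ ∑ j, lam j * dist (x j) (x' j) ^ p :=
    Finset.sum_nonneg fun j _ => mul_nonneg (hlam j) (Real.rpow_nonneg dist_nonneg _)
  have hvSnn : 0 ≤ ∑ j, ‖v j‖ ^ p :=
    Finset.sum_nonneg fun j _ => Real.rpow_nonneg (norm_nonneg _) _
  have h3 : (∑ j, ‖v j‖ ^ p) ^ (1 / p) ≤
      LR * (∑ j, lam j * dist (x j) (x' j) ^ p) ^ (1 / p) := by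
    calc (∑ j, ‖v j‖ ^ p) ^ (1 / p)
        ≤ (LR ^ p * ∑ j, lam j * dist (x j) (x' j) ^ p) ^ (1 / p) :=
          Real.rpow_le_rpow hvSnn hsum (by positivity)
      _ = LR * (∑ j, lam j * dist (x j) (x' j) ^ p) ^ (1 / p) := by
          rw [Real.mul_rpow (Real.rpow_nonneg hLR _) hSnn,
            ← Real.rpow_mul hLR, mul_one_div_cancel hpne, Real.rpow_one]
  calc ‖ψ (K_W v)‖ ≤ ‖ψ‖ * ‖K_W v‖ := h1
    _ ≤ ‖ψ‖ * (M * (∑ j, ‖v j‖ ^ p) ^ (1 / p)) :=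
        mul_le_mul_of_nonneg_left h2 (norm_nonneg _)
    _ ≤ ‖ψ‖ * (M * (LR * (∑ j, lam j * dist (x j) (x' j) ^ p) ^ (1 / p))) := by
        apply mul_le_mul_of_nonneg_left _ (norm_nonneg _)
        exact mul_le_mul_of_nonneg_left h3 hM
    _ = (LR * M * ‖ψ‖) * (∑ j, lam j * dist (x j) (x' j) ^ p) ^ (1 / p) := by ring
end

section
/- Let $E, F$ be Banach lattices, $G$ a Banach lattice, $V, W$ Banach lattices, $\phi : E \to V$ a continuous linear map with dense range, $\psi : W \to F$ an injective continuous linear map, $S : V \to G$ and $R : G \to W$ Lipschitz maps, and suppose $T := \psi \circ R \circ S \circ \phi : E \to F$ is linear. Then $J := R \circ S : V \to W$ is linear (i.e., additive and homogeneous). -/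
open scoped NNReal
/-- If `φ : E → V` is a continuous linear map with dense range, `ψ : W → F` an
injective continuous linear map, `S : V → G` and `R : G → W` Lipschitz maps between
Banach lattices, and the composition `T = ψ ∘ R ∘ S ∘ φ : E → F` is linear, then
`J = R ∘ S : V → W` is linear (additive and homogeneous). -/
theorem stmt_17 {E F G V W : Type*}
    [NormedAddCommGroup E] [Lattice E] [HasSolidNorm E] [IsOrderedAddMonoid E] [NormedSpace ℝ E] [CompleteSpace E]
    [NormedAddCommGroup F] [Lattice F] [HasSolidNorm F] [IsOrderedAddMonoid F] [NormedSpace ℝ F] [CompleteSpace F]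
    [NormedAddCommGroup G] [Lattice G] [HasSolidNorm G] [IsOrderedAddMonoid G] [NormedSpace ℝ G] [CompleteSpace G]
    [NormedAddCommGroup V] [Lattice V] [HasSolidNorm V] [IsOrderedAddMonoid V] [NormedSpace ℝ V] [CompleteSpace V]
    [NormedAddCommGroup W] [Lattice W] [HasSolidNorm W] [IsOrderedAddMonoid W] [NormedSpace ℝ W] [CompleteSpace W]
    (φ : E →L[ℝ] V) (hφ : DenseRange φ)
    (ψ : W →L[ℝ] F) (hψ : Function.Injective ψ)
    (S : V → G) (KS : ℝ≥0) (hS : LipschitzWith KS S)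
    (R : G → W) (KR : ℝ≥0) (hR : LipschitzWith KR R)
    (T : E →ₗ[ℝ] F) (hT : ∀ e : E, T e = ψ (R (S (φ e)))) :
    (∀ v v' : V, R (S (v + v')) = R (S v) + R (S v')) ∧
      (∀ (c : ℝ) (v : V), R (S (c • v)) = c • R (S v)) := by
  set J : V → W := fun v => R (S v) with hJ
  have hJc : Continuous J := (hR.comp hS).continuous
  have hadd : ∀ e e' : E, J (φ e + φ e') = J (φ e) + J (φ e') := by
    intro e e'
    apply hψ
    have h1 := hT (e + e')
    rw [map_add, hT e, hT e'] at h1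
    rw [map_add]
    rw [map_add φ] at h1; exact h1.symm
  have hsmul : ∀ (c : ℝ) (e : E), J (c • φ e) = c • J (φ e) := by
    intro c e
    apply hψ
    have h1 := hT (c • e)
    rw [map_smul, hT e] at h1
    rw [map_smul]
    rw [map_smul φ] at h1; exact h1.symm
  constructor
  · have hd : DenseRange (Prod.map φ φ) := hφ.prodMap hφ
    have heq := hd.equalizer (g := fun p : V × V => J (p.1 + p.2))
      (h := fun p : V × V => J p.1 + J p.2)
      (hJc.comp (continuous_fst.add continuous_snd))
      ((hJc.comp continuous_fst).add (hJc.comp continuous_snd))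
      (funext fun p => hadd p.1 p.2)
    exact fun v v' => congrFun heq (v, v')
  · intro c v
    have heq := hφ.equalizer (g := fun v : V => J (c • v))
      (h := fun v : V => c • J v)
      (hJc.comp (continuous_const_smul c))
      ((continuous_const_smul c).comp hJc)
      (funext fun e => hsmul c e)
    exact congrFun heq v
end
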